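/- Let M ≥ 1, q ∈ (0,1), ε ∈ {−1,1}, and F = [[0, q·I_M], [ε·q^{-1}·I_M, 0]] ∈ M_{2M}(ℂ). In the *-algebra Pol(O_F^+), the following identity holds: Σ_{j,ℓ=1}^{M} (u_{jℓ}·u_{jℓ}^* − u_{jℓ}^*·u_{jℓ}) = (1 − q⁴)·Σ_{j,ℓ=1}^{M} u_{j+M,ℓ}^*·u_{j+M,ℓ}. -/

import Mathlib

open scoped ComplexOrder

/-- The defining relations of `Pol(O_F⁺)`: `U` is unitary and `U·F = F·conj(U)`
(equivalently `U = F·conj(U)·F⁻¹`). -/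
def OrthRel {ι : Type} [Fintype ι] [DecidableEq ι] {A : Type} [Ring A] [Algebra ℂ A]
    [StarRing A] (F : Matrix ι ι ℂ) (u : Matrix ι ι A) : Prop :=
  u * u.conjTranspose = 1 ∧ u.conjTranspose * u = 1 ∧
    u * F.map (algebraMap ℂ A) = F.map (algebraMap ℂ A) * u.map star

/-- A presentation of the universal unital complex *-algebra `Pol(O_F⁺)`:
a unital complex *-algebra carrying a matrix of generators `u` satisfying the
defining relations, universal among all such. -/
structure PolO {ι : Type} [Fintype ι] [DecidableEq ι] (F : Matrix ι ι ℂ) where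
  carrier : Type
  [isRing : Ring carrier]
  [isAlgebra : Algebra ℂ carrier]
  [isStarRing : StarRing carrier]
  [isStarModule : StarModule ℂ carrier]
  u : Matrix ι ι carrier
  rel : OrthRel F u
  universal : ∀ (B : Type) [Ring B] [Algebra ℂ B] [StarRing B] [StarModule ℂ B]
      (v : Matrix ι ι B), OrthRel F v →
      ∃! φ : carrier →⋆ₐ[ℂ] B, ∀ j k, φ (u j k) = v j k

attribute [instance] PolO.isRing PolO.isAlgebra PolO.isStarRing PolO.isStarModule

/-- The defining relations of `Pol(U_N⁺)`: both `U` and `conj(U)` are unitary. -/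
def BiUnitary {ι : Type} [Fintype ι] [DecidableEq ι] {A : Type} [Ring A] [Algebra ℂ A]
    [StarRing A] (u : Matrix ι ι A) : Prop :=
  u * u.conjTranspose = 1 ∧ u.conjTranspose * u = 1 ∧
    u.map star * (u.map star).conjTranspose = 1 ∧ (u.map star).conjTranspose * u.map star = 1

/-- A presentation of the universal unital complex *-algebra `Pol(U_N⁺)` (`N = #ι`). -/
structure PolU (ι : Type) [Fintype ι] [DecidableEq ι] where
  carrier : Type
  [isRing : Ring carrier]
  [isAlgebra : Algebra ℂ carrier]
  [isStarRing : StarRing carrier]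
  [isStarModule : StarModule ℂ carrier]
  u : Matrix ι ι carrier
  rel : BiUnitary u
  universal : ∀ (B : Type) [Ring B] [Algebra ℂ B] [StarRing B] [StarModule ℂ B]
      (v : Matrix ι ι B), BiUnitary v →
      ∃! φ : carrier →⋆ₐ[ℂ] B, ∀ j k, φ (u j k) = v j k

attribute [instance] PolU.isRing PolU.isAlgebra PolU.isStarRing PolU.isStarModule

/-- A unital complex *-algebra is RFD if finite-dimensional *-representations
separate its points. -/
def IsRFD (A : Type) [Ring A] [Algebra ℂ A] [StarRing A] : Prop :=
  ∀ a : A, a ≠ 0 → ∃ (n : ℕ) (π : A →⋆ₐ[ℂ] Matrix (Fin n) (Fin n) ℂ), π a ≠ 0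

/-- A tracial state on a unital complex *-algebra. -/
structure TracialState (A : Type) [Ring A] [Algebra ℂ A] [StarRing A] where
  toFun : A →ₗ[ℂ] ℂ
  map_one' : toFun 1 = 1
  nonneg' : ∀ a : A, 0 ≤ toFun (star a * a)
  tracial' : ∀ a b : A, toFun (a * b) = toFun (b * a)

/-- The Kac ideal: elements killed by `τ(a^* a)` for every tracial state `τ`. -/
def kacIdeal (A : Type) [Ring A] [Algebra ℂ A] [StarRing A] : Set A :=
  {a : A | ∀ τ : TracialState A, τ.toFun (star a * a) = 0}

/-- The RFD ideal: the intersection of the kernels of all finite-dimensional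
*-representations. -/
def rfdIdeal (A : Type) [Ring A] [Algebra ℂ A] [StarRing A] : Set A :=
  {a : A | ∀ (n : ℕ) (π : A →⋆ₐ[ℂ] Matrix (Fin n) (Fin n) ℂ), π a = 0}

/-- A subset of a *-ring which is a two-sided ideal closed under the star operation. -/
def IsStarIdeal {A : Type} [Ring A] [StarRing A] (T : Set A) : Prop :=
  (0 : A) ∈ T ∧ (∀ a b, a ∈ T → b ∈ T → a + b ∈ T) ∧
    (∀ x a, a ∈ T → x * a ∈ T ∧ a * x ∈ T) ∧ (∀ a, a ∈ T → star a ∈ T)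

/-- The two-sided *-ideal generated by a set. -/
def starIdealSpan {A : Type} [Ring A] [StarRing A] (S : Set A) : Set A :=
  ⋂₀ {T : Set A | IsStarIdeal T ∧ S ⊆ T}

/-- The matrix `F = [[0, q·I_M], [ε·q⁻¹·I_M, 0]] ∈ M_{2M}(ℂ)`. -/
noncomputable def Fqe (M : ℕ) (q ε : ℝ) : Matrix (Fin (2 * M)) (Fin (2 * M)) ℂ := fun j k =>
  if (j : ℕ) + M = (k : ℕ) then (q : ℂ)
  else if (j : ℕ) = (k : ℕ) + M then ((ε * q⁻¹ : ℝ) : ℂ) else 0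

/-- The embedding of `{1,…,M}` as the first `M` indices of `{1,…,2M}`. -/
def loIdx {M : ℕ} (j : Fin M) : Fin (2 * M) := ⟨(j : ℕ), by have := j.isLt; omega⟩

/-- The embedding of `{1,…,M}` as the last `M` indices of `{1,…,2M}` (`j ↦ j + M`). -/
def hiIdx {M : ℕ} (j : Fin M) : Fin (2 * M) := ⟨(j : ℕ) + M, by have := j.isLt; omega⟩

lemma loIdx_val {M : ℕ} (j : Fin M) : ((loIdx j : Fin (2*M)) : ℕ) = (j : ℕ) := rfl
lemma hiIdx_val {M : ℕ} (j : Fin M) : ((hiIdx j : Fin (2*M)) : ℕ) = (j : ℕ) + M := rfl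

lemma Fqe_apply (M : ℕ) (q ε : ℝ) (a b : Fin (2*M)) :
    Fqe M q ε a b =
      if (a : ℕ) + M = (b : ℕ) then (q : ℂ)
      else if (a : ℕ) = (b : ℕ) + M then ((ε * q⁻¹ : ℝ) : ℂ) else 0 := rfl

lemma sum_split_aux {A : Type} [AddCommMonoid A] {M : ℕ} (f : Fin (2*M) → A) :
    ∑ k, f k = (∑ k : Fin M, f (loIdx k)) + ∑ k : Fin M, f (hiIdx k) := by
  have h1 : ∀ a : Fin M,
      (finSumFinEquiv.trans (finCongr (two_mul M).symm)) (Sum.inl a) = loIdx a := fun a =>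
    Fin.ext (by simp [loIdx])
  have h2 : ∀ a : Fin M,
      (finSumFinEquiv.trans (finCongr (two_mul M).symm)) (Sum.inr a) = hiIdx a := fun a =>
    Fin.ext (by simp [hiIdx])
  rw [← Equiv.sum_comp (finSumFinEquiv.trans (finCongr (two_mul M).symm)) f,
    Fintype.sum_sum_type]
  simp only [h1, h2]

lemma Fqe_col_lo {M : ℕ} (hM : 1 ≤ M) (q ε : ℝ) (k : Fin (2*M)) (l : Fin M) :
    Fqe M q ε k (loIdx l) = if k = hiIdx l then ((ε * q⁻¹ : ℝ) : ℂ) else 0 := by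
  have hl := l.isLt
  rw [Fqe_apply, loIdx_val]
  rcases eq_or_ne k (hiIdx l) with h | h
  · subst h
    rw [hiIdx_val, if_neg (by omega), if_pos (by omega), if_pos rfl]
  · have h' : (k : ℕ) ≠ (l : ℕ) + M := fun hh => h (Fin.ext (by rw [hiIdx_val, hh]))
    rw [if_neg (by omega), if_neg h', if_neg h]

lemma Fqe_row_lo {M : ℕ} (q ε : ℝ) (j : Fin M) (k : Fin (2*M)) :
    Fqe M q ε (loIdx j) k = if k = hiIdx j then (q : ℂ) else 0 := by
  have hj := j.isLt
  rw [Fqe_apply, loIdx_val]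
  rcases eq_or_ne k (hiIdx j) with h | h
  · subst h
    rw [hiIdx_val, if_pos rfl, if_pos rfl]
  · have h' : (j : ℕ) + M ≠ (k : ℕ) := fun hh => h (Fin.ext (by rw [hiIdx_val, ← hh]))
    rw [if_neg h', if_neg (by omega), if_neg h]

/-- in `Pol(O_F⁺)` for `F = [[0, q·I_M], [ε·q⁻¹·I_M, 0]]`, one has
`Σ_{j,ℓ=1}^M (u_{jℓ}u_{jℓ}^* − u_{jℓ}^*u_{jℓ}) = (1−q⁴)·Σ_{j,ℓ=1}^M u_{j+M,ℓ}^* u_{j+M,ℓ}`. -/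
theorem polO_one_block_commutator_identity (M : ℕ) (hM : 1 ≤ M) (q ε : ℝ)
    (hq0 : 0 < q) (hq1 : q < 1) (hε : ε = 1 ∨ ε = -1) (P : PolO (Fqe M q ε)) :
    ∑ j : Fin M, ∑ l : Fin M,
        (P.u (loIdx j) (loIdx l) * star (P.u (loIdx j) (loIdx l)) -
          star (P.u (loIdx j) (loIdx l)) * P.u (loIdx j) (loIdx l)) =
      ((1 - q ^ 4 : ℝ) : ℂ) •
        ∑ j : Fin M, ∑ l : Fin M,
          star (P.u (hiIdx j) (loIdx l)) * P.u (hiIdx j) (loIdx l) := by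
  classical
  set A := P.carrier
  set u := P.u with hu
  have hQ : (q : ℂ) ≠ 0 := Complex.ofReal_ne_zero.2 (ne_of_gt hq0)
  have hE2 : ((ε : ℝ) : ℂ) ^ 2 = 1 := by
    rcases hε with h | h <;> simp [h]
  have hE0 : ((ε : ℝ) : ℂ) ≠ 0 := fun h => by simpa [h] using hE2
  -- the key entrywise relation: u_{j, l+M} = ε q² (u_{j+M, l})^*
  have hb : ∀ j l : Fin M, u (loIdx j) (hiIdx l) =
      (((ε : ℝ) : ℂ) * (q : ℂ) ^ 2) • star (u (hiIdx j) (loIdx l)) := by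
    intro j l
    have h0 := congrFun (congrFun P.rel.2.2 (loIdx j)) (loIdx l)
    rw [Matrix.mul_apply, Matrix.mul_apply] at h0
    have hL : ∑ k, u (loIdx j) k * (Fqe M q ε).map (algebraMap ℂ A) k (loIdx l)
        = u (loIdx j) (hiIdx l) * algebraMap ℂ A ((ε * q⁻¹ : ℝ) : ℂ) := by
      rw [Finset.sum_eq_single (hiIdx l)]
      · rw [Matrix.map_apply, Fqe_col_lo hM, if_pos rfl]
      · intro k _ hk
        rw [Matrix.map_apply, Fqe_col_lo hM, if_neg hk, map_zero, mul_zero]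
      · intro h; exact absurd (Finset.mem_univ _) h
    have hR : ∑ k, (Fqe M q ε).map (algebraMap ℂ A) (loIdx j) k * (u.map star) k (loIdx l)
        = algebraMap ℂ A (q : ℂ) * star (u (hiIdx j) (loIdx l)) := by
      rw [Finset.sum_eq_single (hiIdx j)]
      · rw [Matrix.map_apply, Matrix.map_apply, Fqe_row_lo, if_pos rfl]
      · intro k _ hk
        rw [Matrix.map_apply, Fqe_row_lo, if_neg hk, map_zero, zero_mul]
      · intro h; exact absurd (Finset.mem_univ _) h
    rw [hL, hR] at h0
    rw [← Algebra.commutes, ← Algebra.smul_def, ← Algebra.smul_def] at h0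
    have h1 : (((ε * q⁻¹ : ℝ) : ℂ))⁻¹ • (((ε * q⁻¹ : ℝ) : ℂ) • u (loIdx j) (hiIdx l))
        = (((ε * q⁻¹ : ℝ) : ℂ))⁻¹ • ((q : ℂ) • star (u (hiIdx j) (loIdx l))) := by rw [h0]
    rw [smul_smul, smul_smul] at h1
    have hc1 : ((ε * q⁻¹ : ℝ) : ℂ) ≠ 0 := by
      push_cast
      exact mul_ne_zero hE0 (inv_ne_zero hQ)
    have hinv : (((ε * q⁻¹ : ℝ) : ℂ))⁻¹ * ((ε * q⁻¹ : ℝ) : ℂ) = 1 := inv_mul_cancel₀ hc1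
    have hsc : (((ε * q⁻¹ : ℝ) : ℂ))⁻¹ * (q : ℂ) = ((ε : ℝ) : ℂ) * (q : ℂ) ^ 2 := by
      push_cast
      field_simp
      linear_combination (-1 : ℂ) * hE2
    rw [hinv, one_smul, hsc] at h1
    exact h1
  -- star of the scalar
  have hstar_s : star ((((ε : ℝ) : ℂ)) * (q : ℂ) ^ 2) = (((ε : ℝ) : ℂ)) * (q : ℂ) ^ 2 := by
    simp [← Complex.ofReal_pow, ← Complex.ofReal_mul]
  -- termwise: b b* = q⁴ (star c * c)
  have hbb : ∀ j l : Fin M, u (loIdx j) (hiIdx l) * star (u (loIdx j) (hiIdx l))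
      = ((q : ℂ) ^ 4) • (star (u (hiIdx j) (loIdx l)) * u (hiIdx j) (loIdx l)) := by
    intro j l
    rw [hb j l, star_smul, hstar_s, smul_mul_assoc, mul_smul_comm, smul_smul, star_star]
    congr 1
    linear_combination (q:ℂ)^4 * hE2
  -- row sums (from U U* = 1)
  have hrow : ∀ j : Fin M,
      (∑ l : Fin M, u (loIdx j) (loIdx l) * star (u (loIdx j) (loIdx l))) +
      (∑ l : Fin M, u (loIdx j) (hiIdx l) * star (u (loIdx j) (hiIdx l))) = 1 := by
    intro j
    have h0 := congrFun (congrFun P.rel.1 (loIdx j)) (loIdx j)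
    rw [Matrix.mul_apply, Matrix.one_apply_eq] at h0
    simp only [Matrix.conjTranspose_apply] at h0
    rw [sum_split_aux (fun k => u (loIdx j) k * star (u (loIdx j) k))] at h0
    exact h0
  -- column sums (from U* U = 1)
  have hcol : ∀ l : Fin M,
      (∑ j : Fin M, star (u (loIdx j) (loIdx l)) * u (loIdx j) (loIdx l)) +
      (∑ j : Fin M, star (u (hiIdx j) (loIdx l)) * u (hiIdx j) (loIdx l)) = 1 := by
    intro l
    have h0 := congrFun (congrFun P.rel.2.1 (loIdx l)) (loIdx l)
    rw [Matrix.mul_apply, Matrix.one_apply_eq] at h0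
    simp only [Matrix.conjTranspose_apply] at h0
    rw [sum_split_aux (fun k => star (u k (loIdx l)) * u k (loIdx l))] at h0
    exact h0
  set S1 : A := ∑ j : Fin M, ∑ l : Fin M, u (loIdx j) (loIdx l) * star (u (loIdx j) (loIdx l))
    with hS1
  set S2 : A := ∑ j : Fin M, ∑ l : Fin M, u (loIdx j) (hiIdx l) * star (u (loIdx j) (hiIdx l))
    with hS2
  set S3 : A := ∑ j : Fin M, ∑ l : Fin M, star (u (loIdx j) (loIdx l)) * u (loIdx j) (loIdx l)
    with hS3
  set S4 : A := ∑ j : Fin M, ∑ l : Fin M, star (u (hiIdx j) (loIdx l)) * u (hiIdx j) (loIdx l)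
    with hS4
  have h12 : S1 + S2 = ∑ _j : Fin M, (1 : A) := by
    rw [hS1, hS2, ← Finset.sum_add_distrib]
    exact Finset.sum_congr rfl fun j _ => hrow j
  have h34 : S3 + S4 = ∑ _j : Fin M, (1 : A) := by
    rw [hS3, hS4]
    calc (∑ j : Fin M, ∑ l : Fin M, star (u (loIdx j) (loIdx l)) * u (loIdx j) (loIdx l)) +
          ∑ j : Fin M, ∑ l : Fin M, star (u (hiIdx j) (loIdx l)) * u (hiIdx j) (loIdx l)
        = (∑ l : Fin M, ∑ j : Fin M, star (u (loIdx j) (loIdx l)) * u (loIdx j) (loIdx l)) +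
          ∑ l : Fin M, ∑ j : Fin M, star (u (hiIdx j) (loIdx l)) * u (hiIdx j) (loIdx l) := by
          rw [Finset.sum_comm, Finset.sum_comm
            (f := fun j l => star (u (hiIdx j) (loIdx l)) * u (hiIdx j) (loIdx l))]
      _ = ∑ l : Fin M, (1 : A) := by
          rw [← Finset.sum_add_distrib]
          exact Finset.sum_congr rfl fun l _ => hcol l
  have h2eq : S2 = ((q : ℂ) ^ 4) • S4 := by
    rw [hS2, hS4, Finset.smul_sum]
    refine Finset.sum_congr rfl fun j _ => ?_
    rw [Finset.smul_sum]
    exact Finset.sum_congr rfl fun l _ => hbb j l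
  have hgoal : ∑ j : Fin M, ∑ l : Fin M,
      (u (loIdx j) (loIdx l) * star (u (loIdx j) (loIdx l)) -
        star (u (loIdx j) (loIdx l)) * u (loIdx j) (loIdx l)) = S1 - S3 := by
    rw [hS1, hS3, ← Finset.sum_sub_distrib]
    exact Finset.sum_congr rfl fun j _ => by rw [← Finset.sum_sub_distrib]
  rw [hgoal]
  have hcast : ((1 - q ^ 4 : ℝ) : ℂ) = 1 - (q : ℂ) ^ 4 := by push_cast; ring
  rw [hcast, sub_smul, one_smul]
  calc S1 - S3 = (S1 + S2) - (S3 + S4) + (S4 - S2) := by abel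
    _ = S4 - ((q : ℂ) ^ 4) • S4 := by rw [h12, h34, h2eq]; abel
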